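/- Let N ≥ 3 and let H be a homogeneous harmonic polynomial on ℝ^N of degree d ≥ 1 such that ∂H/∂x_N ≥ 0 everywhere on ℝ^N. Then either (i) H is a linear function of x (so d = 1), or (ii) d ≥ 2 and H is a homogeneous harmonic polynomial of degree d depending only on the first N−1 variables x₁, …, x_{N−1}. -/

import Mathlib

open MeasureTheory Real Filter Set MvPolynomial



noncomputable def gw (t : ℝ) : ℝ := Real.exp (-t^2/2)

lemma gw_eq (t : ℝ) : gw t = Real.exp (-(1/2 : ℝ) * t^2) := by
  unfold gw; ring_nf

lemma continuous_gw : Continuous gw :=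
  Real.continuous_exp.comp ((continuous_pow 2).neg.div_const 2)

lemma abs_pow_le (n : ℕ) (t : ℝ) :
    |t|^n ≤ 1 + (4^n * n.factorial) * Real.exp (t^2/4) := by
  have h4 : (t^2)^n ≤ 4^n * n.factorial * Real.exp (t^2/4) := by
    have h := Real.pow_div_factorial_le_exp (x := t^2/4) (by positivity) n
    have : (t^2/4)^n = (t^2)^n / 4^n := by rw [div_pow]
    rw [this] at h
    have hf : (0:ℝ) < n.factorial := by positivity
    calc (t^2)^n = ((t^2)^n / 4^n / n.factorial) * (4^n * n.factorial) := by
          field_simp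
      _ ≤ Real.exp (t^2/4) * (4^n * n.factorial) := by
          apply mul_le_mul_of_nonneg_right (by rw [div_div] at h ⊢; exact h) (by positivity)
      _ = 4^n * n.factorial * Real.exp (t^2/4) := by ring
  rcases le_or_gt |t| 1 with h | h
  · have : |t|^n ≤ 1 := pow_le_one₀ (abs_nonneg t) h
    have hpos : (0:ℝ) ≤ 4^n * n.factorial * Real.exp (t^2/4) := by positivity
    linarith
  · have h1 : |t| ≤ t^2 := by
      have : |t| * 1 ≤ |t| * |t| := by nlinarith [abs_nonneg t]
      calc |t| = |t| * 1 := by ring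
        _ ≤ |t| * |t| := this
        _ = t^2 := by rw [abs_mul_abs_self t]; ring
    have h2 : |t|^n ≤ (t^2)^n := pow_le_pow_left₀ (abs_nonneg t) h1 n
    nlinarith [Real.exp_pos (t^2/4)]

lemma pow_gw_bound (n : ℕ) (t : ℝ) :
    ‖t^n * gw t‖ ≤ Real.exp (-(1/2:ℝ) * t^2) + (4^n * n.factorial) * Real.exp (-(1/4:ℝ) * t^2) := by
  have h := abs_pow_le n t
  have hgw : 0 < gw t := Real.exp_pos _
  have : ‖t^n * gw t‖ = |t|^n * gw t := by
    rw [norm_mul, Real.norm_eq_abs, Real.norm_eq_abs, abs_pow, abs_of_pos hgw]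
  rw [this]
  have key : |t|^n * gw t ≤ (1 + (4^n * n.factorial) * Real.exp (t^2/4)) * gw t :=
    mul_le_mul_of_nonneg_right h hgw.le
  have expand : (1 + (4^n * n.factorial) * Real.exp (t^2/4)) * gw t
      = Real.exp (-(1/2:ℝ) * t^2) + (4^n * n.factorial) * Real.exp (-(1/4:ℝ) * t^2) := by
    unfold gw
    rw [add_mul, one_mul, mul_assoc, ← Real.exp_add]
    ring_nf
  linarith [key, expand.le.trans (le_of_eq rfl)]

lemma integrable_pow_gw (n : ℕ) : Integrable (fun t : ℝ => t^n * gw t) := by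
  apply Integrable.mono' ((integrable_exp_neg_mul_sq (by norm_num : (0:ℝ) < 1/2)).add
    ((integrable_exp_neg_mul_sq (by norm_num : (0:ℝ) < 1/4)).const_mul (4^n * n.factorial)))
  · exact ((continuous_pow n).mul continuous_gw).aestronglyMeasurable
  · exact Filter.Eventually.of_forall (pow_gw_bound n)





lemma sq_tendsto_atTop : Tendsto (fun t : ℝ => t^2) atTop atTop :=
  tendsto_pow_atTop (by norm_num)

lemma sq_tendsto_atBot : Tendsto (fun t : ℝ => t^2) atBot atTop := by
  have h := sq_tendsto_atTop.comp tendsto_neg_atBot_atTop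
  have : ((fun t : ℝ => t^2) ∘ Neg.neg) = fun t : ℝ => t^2 := by
    funext t; simp [Function.comp, neg_pow]
  rwa [this] at h

lemma exp_bound_tendsto_zero {l : Filter ℝ} (h : Tendsto (fun t : ℝ => t^2) l atTop) (c : ℝ) :
    Tendsto (fun t : ℝ => c * Real.exp (-(1/4:ℝ) * t^2)) l (nhds 0) := by
  have h1 : Tendsto (fun t : ℝ => -(1/4:ℝ) * t^2) l atBot := by
    apply Tendsto.const_mul_atTop_of_neg (by norm_num) h
  have := (Real.tendsto_exp_atBot).comp h1
  simpa using this.const_mul c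

lemma pow_gw_tendsto (n : ℕ) {l : Filter ℝ} (h : Tendsto (fun t : ℝ => t^2) l atTop) :
    Tendsto (fun t : ℝ => t^n * gw t) l (nhds 0) := by
  refine squeeze_zero_norm (fun t => ?_) (exp_bound_tendsto_zero h (1 + 4^n * n.factorial))
  have h1 := pow_gw_bound n t
  have h2 : Real.exp (-(1/2:ℝ) * t^2) ≤ Real.exp (-(1/4:ℝ) * t^2) := by
    apply Real.exp_le_exp.2; nlinarith [sq_nonneg t]
  nlinarith [h1, h2, Real.exp_pos (-(1/4:ℝ) * t^2)]

/-- derivative of t^(k+1) * gw t -/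
lemma hasDerivAt_pow_gw (k : ℕ) (t : ℝ) :
    HasDerivAt (fun t : ℝ => t^(k+1) * gw t)
      ((k+1 : ℝ) * t^k * gw t - t^(k+2) * gw t) t := by
  have hgw : HasDerivAt gw (-t * gw t) t := by
    have h1 : HasDerivAt (fun t : ℝ => -t^2/2) (-t) t := by
      have := (hasDerivAt_pow 2 t).neg.div_const 2
      simpa using this.congr_deriv (by ring)
    have h2 := (Real.hasDerivAt_exp (-t^2/2)).comp t h1
    have : HasDerivAt (fun t : ℝ => Real.exp (-t^2/2)) (Real.exp (-t^2/2) * (-t)) t := h2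
    exact this.congr_deriv (by unfold gw; ring)
  have hp : HasDerivAt (fun t : ℝ => t^(k+1)) ((k+1 : ℝ) * t^k) t := by
    simpa using hasDerivAt_pow (k+1) t
  have := hp.mul hgw
  exact this.congr_deriv (by ring)

lemma integral_pow_gw_deriv_zero (k : ℕ) :
    ∫ t : ℝ, ((k+1 : ℝ) * t^k * gw t - t^(k+2) * gw t) = 0 := by
  set F : ℝ → ℝ := fun t => t^(k+1) * gw t with hF
  set G : ℝ → ℝ := fun t => (k+1 : ℝ) * t^k * gw t - t^(k+2) * gw t with hG
  have hint : Integrable G := by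
    have := ((integrable_pow_gw k).const_mul ((k:ℝ)+1)).sub (integrable_pow_gw (k+2))
    apply this.congr
    filter_upwards with t
    show ((k:ℝ)+1) * (t^k * gw t) - t^(k+2) * gw t = G t
    simp only [hG]; ring
  have hderiv : ∀ t : ℝ, HasDerivAt F (G t) t := fun t => hasDerivAt_pow_gw k t
  have htop : Tendsto F atTop (nhds 0) := pow_gw_tendsto (k+1) sq_tendsto_atTop
  have hbot : Tendsto F atBot (nhds 0) := pow_gw_tendsto (k+1) sq_tendsto_atBot
  have h1 : ∫ t in Iic (0:ℝ), G t = F 0 - 0 :=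
    integral_Iic_of_hasDerivAt_of_tendsto' (fun x _ => hderiv x) hint.integrableOn hbot
  have h2 : ∫ t in Ioi (0:ℝ), G t = 0 - F 0 :=
    integral_Ioi_of_hasDerivAt_of_tendsto' (fun x _ => hderiv x) hint.integrableOn htop
  have := intervalIntegral.integral_Iic_add_Ioi (f := G) (b := 0)
    hint.integrableOn hint.integrableOn
  rw [h1, h2] at this
  linarith [this]

noncomputable def gM (n : ℕ) : ℝ := ∫ t : ℝ, t^n * gw t

lemma gM_rec (k : ℕ) : gM (k+2) = (k+1 : ℝ) * gM k := by
  have h := integral_pow_gw_deriv_zero k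
  have h2 : ∫ t : ℝ, (((k:ℝ)+1) * (t^k * gw t) - t^(k+2) * gw t) = 0 := by
    rw [← h]; congr 1; funext t; ring
  rw [integral_sub ((integrable_pow_gw k).const_mul _) (integrable_pow_gw (k+2)),
    MeasureTheory.integral_const_mul] at h2
  unfold gM
  push_cast
  linarith [h2]

lemma gM_one : gM 1 = 0 := by
  have h := integral_pow_gw_deriv_zero 0 -- ∫ (1 * t^0 * gw - t^2 * gw) = 0  -- not what we need
  -- directly: F = gw, F' = -t * gw
  have hgw : ∀ t : ℝ, HasDerivAt gw (-(t^1 * gw t)) t := by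
    intro t
    have h1 : HasDerivAt (fun t : ℝ => -t^2/2) (-t) t := by
      have := (hasDerivAt_pow 2 t).neg.div_const 2
      simpa using this.congr_deriv (by ring)
    have h2 := (Real.hasDerivAt_exp (-t^2/2)).comp t h1
    have h3 : HasDerivAt (fun t : ℝ => Real.exp (-t^2/2)) (Real.exp (-t^2/2) * (-t)) t := h2
    have h4 : Real.exp (-t^2/2) * (-t) = -(t^1 * gw t) := by unfold gw; ring
    rw [h4] at h3; exact h3
  have hint : Integrable (fun t : ℝ => -(t^1 * gw t)) := (integrable_pow_gw 1).neg
  have htop : Tendsto gw atTop (nhds 0) := by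
    have := pow_gw_tendsto 0 sq_tendsto_atTop; simpa using this
  have hbot : Tendsto gw atBot (nhds 0) := by
    have := pow_gw_tendsto 0 sq_tendsto_atBot; simpa using this
  have h1 : ∫ t in Iic (0:ℝ), -(t^1 * gw t) = gw 0 - 0 :=
    integral_Iic_of_hasDerivAt_of_tendsto' (fun x _ => hgw x) hint.integrableOn hbot
  have h2 : ∫ t in Ioi (0:ℝ), -(t^1 * gw t) = 0 - gw 0 :=
    integral_Ioi_of_hasDerivAt_of_tendsto' (fun x _ => hgw x) hint.integrableOn htop
  have hsum := intervalIntegral.integral_Iic_add_Ioi (f := fun t : ℝ => -(t^1 * gw t)) (b := 0)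
    hint.integrableOn hint.integrableOn
  rw [h1, h2] at hsum
  have h5 : ∫ t : ℝ, -(t^1 * gw t) = 0 := by linarith
  rw [integral_neg] at h5
  unfold gM
  linarith

/-- `gM (n+1) = n * gM (n-1)` with ℕ-subtraction. -/
lemma gM_succ (n : ℕ) : gM (n+1) = (n : ℝ) * gM (n-1) := by
  cases n with
  | zero => simpa using gM_one
  | succ m => simpa using gM_rec m



noncomputable def fe {N : ℕ} (r : MvPolynomial (Fin N) ℝ) : EuclideanSpace ℝ (Fin N) → ℝ :=
  fun x => MvPolynomial.eval (fun i => x i) r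

noncomputable def Lr {N : ℕ} (r : MvPolynomial (Fin N) ℝ) (x : EuclideanSpace ℝ (Fin N)) :
    EuclideanSpace ℝ (Fin N) →L[ℝ] ℝ :=
  ∑ i, MvPolynomial.eval (fun j => x j) (MvPolynomial.pderiv i r) • EuclideanSpace.proj i

lemma Lr_apply {N : ℕ} (r : MvPolynomial (Fin N) ℝ) (x v : EuclideanSpace ℝ (Fin N)) :
    Lr r x v = ∑ i, MvPolynomial.eval (fun j => x j) (MvPolynomial.pderiv i r) * v i := by
  simp [Lr, ContinuousLinearMap.sum_apply]

lemma Lr_single {N : ℕ} (r : MvPolynomial (Fin N) ℝ) (x : EuclideanSpace ℝ (Fin N)) (i : Fin N) :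
    Lr r x (EuclideanSpace.single i 1) = MvPolynomial.eval (fun j => x j) (MvPolynomial.pderiv i r) := by
  rw [Lr_apply]
  rw [Finset.sum_eq_single i]
  · simp [EuclideanSpace.single_apply]
  · intro b _ hb
    have : EuclideanSpace.single i (1:ℝ) b = 0 := by
      rw [EuclideanSpace.single_apply, if_neg hb]
    rw [this, mul_zero]
  · intro h; exact absurd (Finset.mem_univ i) h

lemma hasFDerivAt_fe {N : ℕ} (r : MvPolynomial (Fin N) ℝ) (x : EuclideanSpace ℝ (Fin N)) :
    HasFDerivAt (fe r) (Lr r x) x := by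
  induction r using MvPolynomial.induction_on with
  | C a =>
    have : Lr (C a : MvPolynomial (Fin N) ℝ) x = 0 := by
      unfold Lr; simp [pderiv_C]
    rw [this]
    have hfe : fe (C a : MvPolynomial (Fin N) ℝ) = fun _ => a := by
      funext y; simp [fe]
    rw [hfe]
    exact hasFDerivAt_const a x
  | add p q hp hq =>
    have : Lr (p + q) x = Lr p x + Lr q x := by
      unfold Lr
      rw [← Finset.sum_add_distrib]
      congr 1; funext i
      rw [map_add, map_add, add_smul]
    rw [this]
    have hfe : fe (p + q) = fun y => fe p y + fe q y := by
      funext y; simp [fe]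
    rw [hfe]
    exact hp.add hq
  | mul_X p n hp =>
    have hproj : HasFDerivAt (fun y : EuclideanSpace ℝ (Fin N) => y n)
        (EuclideanSpace.proj (𝕜 := ℝ) n) x := by
      simpa using (EuclideanSpace.proj (𝕜 := ℝ) n : EuclideanSpace ℝ (Fin N) →L[ℝ] ℝ).hasFDerivAt (x := x)
    have hmul := hp.mul hproj
    have heq : fe (p * X n) = fun y : EuclideanSpace ℝ (Fin N) => fe p y * y n := by
      funext y; simp [fe]
    have hL : Lr (p * X n) x = fe p x • EuclideanSpace.proj n + x n • Lr p x := by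
      apply ContinuousLinearMap.ext
      intro v
      rw [Lr_apply]
      simp only [ContinuousLinearMap.add_apply, ContinuousLinearMap.smul_apply, Lr_apply,
        smul_eq_mul]
      have : ∀ i : Fin N, MvPolynomial.eval (fun j => x j) (pderiv i (p * X n)) * v i
          = (MvPolynomial.eval (fun j => x j) (pderiv i p) * x n) * v i
            + (if i = n then fe p x * v i else 0) := by
        intro i
        rw [pderiv_mul]
        by_cases h : i = n
        · subst h
          simp [pderiv_X_self, fe]
          ring
        · rw [pderiv_X_of_ne (Ne.symm h)]
          simp [h, fe]
      rw [Finset.sum_congr rfl (fun i _ => this i), Finset.sum_add_distrib]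
      rw [Finset.sum_ite_eq' Finset.univ n (fun i => fe p x * v i)]
      simp only [Finset.mem_univ, if_true]
      have hproj_apply : (EuclideanSpace.proj (𝕜 := ℝ) n :
          EuclideanSpace ℝ (Fin N) →L[ℝ] ℝ) v = v n := rfl
      rw [hproj_apply, Finset.mul_sum, add_comm]
      congr 1
      apply Finset.sum_congr rfl
      intros
      ring
    rw [heq, hL]
    exact hmul





lemma pderiv_comm {N : ℕ} (i j : Fin N) (s : MvPolynomial (Fin N) ℝ) :
    pderiv i (pderiv j s) = pderiv j (pderiv i s) := by
  by_cases h : i = j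
  · subst h; rfl
  induction s using MvPolynomial.induction_on' with
  | monomial a c =>
    simp only [pderiv_monomial]
    have e1 : a - Finsupp.single j 1 - Finsupp.single i 1
        = a - Finsupp.single i 1 - Finsupp.single j 1 := tsub_right_comm
    have e2 : ((a - Finsupp.single j 1 : Fin N →₀ ℕ)) i = a i := by
      rw [Finsupp.tsub_apply (α := ℕ) a (Finsupp.single j 1) i,
        Finsupp.single_eq_of_ne' (Ne.symm h), tsub_zero]
    have e3 : ((a - Finsupp.single i 1 : Fin N →₀ ℕ)) j = a j := by
      rw [Finsupp.tsub_apply (α := ℕ) a (Finsupp.single i 1) j,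
        Finsupp.single_eq_of_ne' h, tsub_zero]
    rw [e1, e2, e3]
    congr 1
    push_cast
    ring
  | add p q hp hq =>
    simp only [map_add, hp, hq]

noncomputable def Wg {N : ℕ} (x : Fin N → ℝ) : ℝ := ∏ i, gw (x i)

lemma gw_pos (t : ℝ) : 0 < gw t := Real.exp_pos _

lemma Wg_pos {N : ℕ} (x : Fin N → ℝ) : 0 < Wg x :=
  Finset.prod_pos fun i _ => gw_pos (x i)

lemma continuous_Wg {N : ℕ} : Continuous (Wg (N := N)) :=
  continuous_finset_prod _ fun i _ => continuous_gw.comp (continuous_apply i)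

noncomputable def Ig {N : ℕ} (r : MvPolynomial (Fin N) ℝ) : ℝ :=
  ∫ x : Fin N → ℝ, MvPolynomial.eval x r * Wg x

lemma eval_monomial_mul_Wg {N : ℕ} (a : Fin N →₀ ℕ) (c : ℝ) (x : Fin N → ℝ) :
    MvPolynomial.eval x (monomial a c) * Wg x = c * ∏ i, ((x i)^(a i) * gw (x i)) := by
  rw [eval_monomial]
  unfold Wg
  rw [Finsupp.prod_fintype _ _ (fun i => pow_zero (x i))]
  rw [mul_assoc, ← Finset.prod_mul_distrib]

lemma integrable_eval_monomial_Wg {N : ℕ} (a : Fin N →₀ ℕ) (c : ℝ) :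
    Integrable (fun x : Fin N → ℝ => MvPolynomial.eval x (monomial a c) * Wg x) := by
  have h : Integrable (fun x : Fin N → ℝ => ∏ i, ((x i)^(a i) * gw (x i))) :=
    Integrable.fintype_prod (f := fun i (t : ℝ) => t^(a i) * gw t)
      (fun i => integrable_pow_gw (a i))
  have := h.const_mul c
  apply this.congr
  filter_upwards with x
  rw [eval_monomial_mul_Wg]

lemma integrable_eval_Wg {N : ℕ} (r : MvPolynomial (Fin N) ℝ) :
    Integrable (fun x : Fin N → ℝ => MvPolynomial.eval x r * Wg x) := by
  induction r using MvPolynomial.induction_on' with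
  | monomial a c => exact integrable_eval_monomial_Wg a c
  | add p q hp hq =>
    apply (hp.add hq).congr
    filter_upwards with x
    show (eval x) p * Wg x + (eval x) q * Wg x = _
    rw [map_add, add_mul]

lemma Ig_monomial {N : ℕ} (a : Fin N →₀ ℕ) (c : ℝ) :
    Ig (monomial a c) = c * ∏ i, gM (a i) := by
  unfold Ig
  have e : ∀ x : Fin N → ℝ, MvPolynomial.eval x (monomial a c) * Wg x
      = c * ∏ i, ((x i)^(a i) * gw (x i)) := eval_monomial_mul_Wg a c
  rw [integral_congr_ae (Filter.Eventually.of_forall e)]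
  rw [MeasureTheory.integral_const_mul]
  congr 1
  exact MeasureTheory.integral_fintype_prod_eq_prod (ι := Fin N)
    (fun i (t : ℝ) => t^(a i) * gw t)

lemma Ig_add {N : ℕ} (r s : MvPolynomial (Fin N) ℝ) : Ig (r + s) = Ig r + Ig s := by
  unfold Ig
  rw [← integral_add (integrable_eval_Wg r) (integrable_eval_Wg s)]
  congr 1; funext x
  rw [map_add, add_mul]

lemma Ig_zero {N : ℕ} : Ig (0 : MvPolynomial (Fin N) ℝ) = 0 := by
  unfold Ig; simp

lemma Ig_sum {N : ℕ} {α : Type*} (s : Finset α) (f : α → MvPolynomial (Fin N) ℝ) :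
    Ig (∑ i ∈ s, f i) = ∑ i ∈ s, Ig (f i) := by
  induction s using Finset.cons_induction with
  | empty => simpa using Ig_zero
  | cons a s ha ih =>
    rw [Finset.sum_cons, Finset.sum_cons, Ig_add, ih]

lemma Ig_pderiv_monomial {N : ℕ} (a : Fin N →₀ ℕ) (c : ℝ) (i : Fin N) :
    Ig (pderiv i (monomial a c)) = Ig (X i * monomial a c) := by
  have hXm : (X i : MvPolynomial (Fin N) ℝ) * monomial a c
      = monomial (a + Finsupp.single i 1) c := by
    rw [X, monomial_mul, one_mul, add_comm]
  rw [pderiv_monomial, hXm, Ig_monomial, Ig_monomial]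
  have erase1 : ∏ j, gM (((a - Finsupp.single i 1 : Fin N →₀ ℕ)) j)
      = gM (a i - 1) * ∏ j ∈ Finset.univ.erase i, gM (a j) := by
    rw [← Finset.mul_prod_erase Finset.univ _ (Finset.mem_univ i)]
    congr 1
    · congr 1
      rw [Finsupp.tsub_apply (α := ℕ) a (Finsupp.single i 1) i, Finsupp.single_eq_same]
    · apply Finset.prod_congr rfl
      intro j hj
      congr 1
      rw [Finsupp.tsub_apply (α := ℕ) a (Finsupp.single i 1) j,
        Finsupp.single_eq_of_ne' (Finset.ne_of_mem_erase hj).symm, tsub_zero]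
  have erase2 : ∏ j, gM (((a + Finsupp.single i 1 : Fin N →₀ ℕ)) j)
      = gM (a i + 1) * ∏ j ∈ Finset.univ.erase i, gM (a j) := by
    rw [← Finset.mul_prod_erase Finset.univ _ (Finset.mem_univ i)]
    congr 1
    · congr 1
      rw [Finsupp.add_apply, Finsupp.single_eq_same]
    · apply Finset.prod_congr rfl
      intro j hj
      congr 1
      rw [Finsupp.add_apply, Finsupp.single_eq_of_ne' (Finset.ne_of_mem_erase hj).symm, add_zero]
  rw [erase1, erase2, gM_succ (a i)]
  ring

lemma Ig_pderiv {N : ℕ} (r : MvPolynomial (Fin N) ℝ) (i : Fin N) :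
    Ig (pderiv i r) = Ig (X i * r) := by
  induction r using MvPolynomial.induction_on' with
  | monomial a c => exact Ig_pderiv_monomial a c i
  | add p q hp hq =>
    rw [map_add, Ig_add, hp, hq, mul_add, Ig_add]

/-- Key positivity lemma: a nonnegative polynomial with zero Laplacian and
Euler identity with factor `c ≠ 0` vanishes identically. -/
lemma eval_eq_zero_of_harmonic_nonneg {N : ℕ} (q : MvPolynomial (Fin N) ℝ) (c : ℝ)
    (hc : c ≠ 0)
    (hlap : (∑ i, pderiv i (pderiv i q)) = 0)
    (heuler : ∀ x : Fin N → ℝ, ∑ i, x i * MvPolynomial.eval x (pderiv i q)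
        = c * MvPolynomial.eval x q)
    (hnonneg : ∀ x : Fin N → ℝ, 0 ≤ MvPolynomial.eval x q) :
    ∀ x : Fin N → ℝ, MvPolynomial.eval x q = 0 := by
  have h1 : ∑ i, Ig (pderiv i (pderiv i q)) = 0 := by
    rw [← Ig_sum, hlap, Ig_zero]
  have h2 : ∑ i, Ig (X i * pderiv i q) = 0 := by
    rw [← h1]
    apply Finset.sum_congr rfl
    intro i _
    exact (Ig_pderiv (pderiv i q) i).symm
  have h3 : Ig (∑ i, X i * pderiv i q) = c * Ig q := by
    unfold Ig
    rw [← MeasureTheory.integral_const_mul]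
    apply integral_congr_ae
    filter_upwards with x
    have : MvPolynomial.eval x (∑ i, X i * pderiv i q)
        = ∑ i, x i * MvPolynomial.eval x (pderiv i q) := by
      rw [map_sum]
      apply Finset.sum_congr rfl
      intro i _
      rw [map_mul, eval_X]
    rw [this, heuler x]
    ring
  rw [Ig_sum] at h3
  rw [h2] at h3
  have hIq : Ig q = 0 := by
    rcases mul_eq_zero.mp h3.symm with h | h
    · exact absurd h hc
    · exact h
  -- now positivity
  have hae : (fun x : Fin N → ℝ => MvPolynomial.eval x q * Wg x) =ᵐ[volume] 0 := by
    rw [← MeasureTheory.integral_eq_zero_iff_of_nonneg]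
    · exact hIq
    · intro x
      exact mul_nonneg (hnonneg x) (Wg_pos x).le
    · exact integrable_eval_Wg q
  have hcont : Continuous (fun x : Fin N → ℝ => MvPolynomial.eval x q * Wg x) :=
    (MvPolynomial.continuous_eval q).mul continuous_Wg
  have heq : (fun x : Fin N → ℝ => MvPolynomial.eval x q * Wg x) = 0 :=
    (Continuous.ae_eq_iff_eq volume hcont continuous_const).mp hae
  intro x
  have := congrFun heq x
  simp only [Pi.zero_apply] at this
  rcases mul_eq_zero.mp this with h | h
  · exact h
  · exact absurd h (Wg_pos x).ne'










/-- The Laplacian of `f : ℝᴺ → ℝ`, as the sum of the second partial derivatives. -/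
noncomputable def lapl {N : ℕ} (f : EuclideanSpace ℝ (Fin N) → ℝ)
    (x : EuclideanSpace ℝ (Fin N)) : ℝ :=
  ∑ i, fderiv ℝ (fun y => fderiv ℝ f y (EuclideanSpace.single i 1)) x (EuclideanSpace.single i 1)

/-- **Corollary 3.2.** Let `N ≥ 3` and let `H` be a homogeneous harmonic polynomial of
degree `d ≥ 1` on `ℝᴺ` with `∂H/∂x_N ≥ 0` everywhere. Then either `H` is a linear
function (and `d = 1`), or `d ≥ 2` and `H` depends only on the first `N - 1` variables. -/
theorem homogeneous_harmonic_monotone_alternative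
    (N : ℕ) (hN : 3 ≤ N) (d : ℕ) (hd : 1 ≤ d)
    (H : EuclideanSpace ℝ (Fin N) → ℝ)
    (p : MvPolynomial (Fin N) ℝ)
    (hp : ∀ x, H x = MvPolynomial.eval (fun i => x i) p)
    (hhom : ∀ (t : ℝ) (x : EuclideanSpace ℝ (Fin N)), H (t • x) = t ^ d * H x)
    (hharm : ∀ x, lapl H x = 0)
    (hmon : ∀ x, 0 ≤ fderiv ℝ H x (EuclideanSpace.single (⟨N - 1, by omega⟩ : Fin N) 1)) :
    (d = 1 ∧ ∃ c : Fin N → ℝ, ∀ x, H x = ∑ i, c i * x i) ∨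
    (2 ≤ d ∧ ∀ x y : EuclideanSpace ℝ (Fin N),
      (∀ i : Fin N, (i : ℕ) < N - 1 → x i = y i) → H x = H y) := by
  classical
  set i₀ : Fin N := ⟨N - 1, by omega⟩ with hi₀
  have hHfe : H = fe p := funext hp
  have hfderiv : ∀ x, fderiv ℝ H x = Lr p x := by
    intro x
    rw [hHfe]
    exact (hasFDerivAt_fe p x).fderiv
  set q : MvPolynomial (Fin N) ℝ := pderiv i₀ p with hq
  -- G ≥ 0
  have hGnonneg : ∀ x : EuclideanSpace ℝ (Fin N), 0 ≤ MvPolynomial.eval (fun j => x j) q := by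
    intro x
    have := hmon x
    rwa [hfderiv x, Lr_single] at this
  -- Laplacian in polynomial form
  have hlapl_eq : ∀ x : EuclideanSpace ℝ (Fin N),
      lapl H x = ∑ i, MvPolynomial.eval (fun j => x j) (pderiv i (pderiv i p)) := by
    intro x
    unfold lapl
    apply Finset.sum_congr rfl
    intro i _
    have inner_eq : (fun y => fderiv ℝ H y (EuclideanSpace.single i 1)) = fe (pderiv i p) := by
      funext y
      rw [hfderiv y, Lr_single]
      rfl
    rw [inner_eq, (hasFDerivAt_fe (pderiv i p) x).fderiv, Lr_single]
  have hlapp : (∑ i, pderiv i (pderiv i p)) = 0 := by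
    apply MvPolynomial.funext
    intro v
    rw [map_sum, map_zero]
    have := hharm ((EuclideanSpace.equiv (Fin N) ℝ).symm v)
    rw [hlapl_eq] at this
    exact this
  have hlapq : (∑ i, pderiv i (pderiv i q)) = 0 := by
    have : ∀ i : Fin N, pderiv i (pderiv i q) = pderiv i₀ (pderiv i (pderiv i p)) := by
      intro i
      rw [hq, pderiv_comm i i₀ p, pderiv_comm i i₀ (pderiv i p)]
    rw [Finset.sum_congr rfl (fun i _ => this i), ← map_sum, hlapp, map_zero]
  -- homogeneity of the derivative
  have hGt : ∀ (t : ℝ) (x : EuclideanSpace ℝ (Fin N)),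
      t * fe q (t • x) = t ^ d * fe q x := by
    intro t x
    have hsm : HasFDerivAt (fun y : EuclideanSpace ℝ (Fin N) => t • y)
        (t • ContinuousLinearMap.id ℝ (EuclideanSpace ℝ (Fin N))) x :=
      (ContinuousLinearMap.id ℝ (EuclideanSpace ℝ (Fin N))).hasFDerivAt.const_smul t
    have h1 : HasFDerivAt (fun y : EuclideanSpace ℝ (Fin N) => H (t • y))
        ((Lr p (t • x)).comp (t • ContinuousLinearMap.id ℝ (EuclideanSpace ℝ (Fin N)))) x := by
      rw [hHfe]
      exact (hasFDerivAt_fe p (t • x)).comp x hsm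
    have h2 : HasFDerivAt (fun y : EuclideanSpace ℝ (Fin N) => t ^ d * H y)
        (t ^ d • Lr p x) x := by
      rw [hHfe]
      exact (hasFDerivAt_fe p x).const_mul (t ^ d)
    have hFeq : (fun y : EuclideanSpace ℝ (Fin N) => H (t • y))
        = fun y : EuclideanSpace ℝ (Fin N) => t ^ d * H y := funext fun y => hhom t y
    rw [hFeq] at h1
    have huniq := h1.unique h2
    have happ := congrArg (fun (L : EuclideanSpace ℝ (Fin N) →L[ℝ] ℝ) =>
      L (EuclideanSpace.single i₀ 1)) huniq
    simp only [ContinuousLinearMap.comp_apply, ContinuousLinearMap.smul_apply,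
      ContinuousLinearMap.coe_smul', Pi.smul_apply, ContinuousLinearMap.coe_id', id_eq,
      smul_eq_mul] at happ
    rw [(Lr p (t • x)).map_smul, Lr_single, Lr_single] at happ
    simpa [fe, smul_eq_mul] using happ
  -- the rest split on d
  rcases Nat.lt_or_ge d 2 with hd2 | hd2
  · -- d = 1
    have hd1 : d = 1 := by omega
    left
    refine ⟨hd1, ⟨fun i => MvPolynomial.eval
      (fun j => (0 : EuclideanSpace ℝ (Fin N)) j) (pderiv i p), ?_⟩⟩
    intro x
    have hs : HasDerivAt (fun t : ℝ => t • x) x 0 := by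
      simpa using (hasDerivAt_id (0:ℝ)).smul_const x
    have h1 : HasDerivAt (fun t : ℝ => H (t • x)) (Lr p ((0:ℝ) • x) x) 0 := by
      rw [hHfe]
      exact (hasFDerivAt_fe p ((0:ℝ) • x)).comp_hasDerivAt 0 hs
    have h2 : HasDerivAt (fun t : ℝ => t ^ d * H x) (H x) 0 := by
      rw [hd1]
      simpa [pow_one] using (hasDerivAt_id (0:ℝ)).mul_const (H x)
    have hFeq : (fun t : ℝ => H (t • x)) = fun t : ℝ => t ^ d * H x :=
      funext fun t => hhom t x
    rw [hFeq] at h1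
    have huniq := h1.unique h2
    rw [zero_smul] at huniq
    rw [← huniq, Lr_apply]
  · right
    refine ⟨hd2, ?_⟩
    have heulerE : ∀ x : EuclideanSpace ℝ (Fin N),
        ∑ i, (x i) * MvPolynomial.eval (fun j => x j) (pderiv i q)
          = ((d - 1 : ℕ) : ℝ) * MvPolynomial.eval (fun j => x j) q := by
      intro x
      have hs : HasDerivAt (fun t : ℝ => t • x) x 1 := by
        simpa using (hasDerivAt_id (1:ℝ)).smul_const x
      have h1 : HasDerivAt (fun t : ℝ => fe q (t • x)) (Lr q ((1:ℝ) • x) x) 1 :=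
        by exact (hasFDerivAt_fe q ((1:ℝ) • x)).comp_hasDerivAt 1 hs
      rw [one_smul] at h1
      have h2 : HasDerivAt (fun t : ℝ => t ^ (d-1) * fe q x)
          (((d - 1 : ℕ) : ℝ) * 1 ^ (d - 1 - 1) * fe q x) 1 :=
        (hasDerivAt_pow (d-1) 1).mul_const (fe q x)
      have heq : (fun t : ℝ => fe q (t • x)) =ᶠ[nhds 1]
          (fun t : ℝ => t ^ (d-1) * fe q x) := by
        filter_upwards [Ioi_mem_nhds (by norm_num : (0:ℝ) < 1)] with t ht
        have h := hGt t x
        have ht' : t ≠ 0 := ne_of_gt ht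
        have hdd : t ^ d = t * t ^ (d - 1) := by
          conv_lhs => rw [show d = (d-1) + 1 by omega]
          rw [pow_succ]
          ring
        show fe q (t • x) = t ^ (d-1) * fe q x
        apply mul_left_cancel₀ ht'
        rw [h, hdd]
        ring
      have h1' : HasDerivAt (fun t : ℝ => fe q (t • x))
          (((d - 1 : ℕ) : ℝ) * 1 ^ (d - 1 - 1) * fe q x) 1 :=
        h2.congr_of_eventuallyEq heq
      have huniq := h1.unique h1'
      rw [Lr_apply] at huniq
      simp only [one_pow, mul_one] at huniq
      rw [show ((d - 1 : ℕ) : ℝ) * MvPolynomial.eval (fun j => x j) q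
        = ((d - 1 : ℕ) : ℝ) * fe q x from rfl]
      rw [← huniq]
      apply Finset.sum_congr rfl
      intros
      ring
    have hc : ((d - 1 : ℕ) : ℝ) ≠ 0 := Nat.cast_ne_zero.mpr (by omega)
    have hqzero : ∀ v : Fin N → ℝ, MvPolynomial.eval v q = 0 := by
      apply eval_eq_zero_of_harmonic_nonneg q _ hc hlapq
      · intro v
        exact heulerE ((EuclideanSpace.equiv (Fin N) ℝ).symm v)
      · intro v
        exact hGnonneg ((EuclideanSpace.equiv (Fin N) ℝ).symm v)
    intro x y hxy
    set e : EuclideanSpace ℝ (Fin N) := EuclideanSpace.single i₀ 1 with he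
    set u : ℝ → ℝ := fun s => H (x + s • e) with hu
    have hud : ∀ s : ℝ, HasDerivAt u 0 s := by
      intro s
      have hs : HasDerivAt (fun s : ℝ => x + s • e) e s := by
        simpa using ((hasDerivAt_id s).smul_const e).const_add x
      have h1 : HasDerivAt u (Lr p (x + s • e) e) s := by
        rw [hu, hHfe]
        exact (hasFDerivAt_fe p (x + s • e)).comp_hasDerivAt s hs
      have h0 : Lr p (x + s • e) e = 0 := by
        rw [he, Lr_single]
        exact hqzero _
      rwa [h0] at h1
    have hconst : u 0 = u (y i₀ - x i₀) := by
      apply is_const_of_deriv_eq_zero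
      · intro s
        exact (hud s).differentiableAt
      · intro s
        exact (hud s).deriv
    have hx0 : x + (0:ℝ) • e = x := by rw [zero_smul, add_zero]
    have hy0 : x + (y i₀ - x i₀) • e = y := by
      ext j
      show x j + (y i₀ - x i₀) * e j = y j
      by_cases hj : j = i₀
      · subst hj
        rw [he, EuclideanSpace.single_apply, if_pos rfl]
        ring
      · have hj' : (j : ℕ) < N - 1 := by
          have h1 : (j : ℕ) ≠ N - 1 := by
            intro hcontra
            apply hj
            apply Fin.ext
            rw [hcontra, hi₀]
          have := j.isLt
          omega
        rw [he, EuclideanSpace.single_apply, if_neg hj, mul_zero, add_zero]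
        exact hxy j hj'
    have h1 : H x = u 0 := by rw [hu]; simp only [hx0]
    have h2 : H y = u (y i₀ - x i₀) := by rw [hu]; simp only [hy0]
    rw [h1, h2, hconst]
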